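/- Let 0 < α < 1/4 and C_{α,N} = (∑_{|n| ≤ N} 2⟨n⟩^{-4α})^{-1/4}. Then for every ε > 0, C_{α,N}⁴ · ∑_{n₁ + n₂ = n, |n₁|,|n₂| ≤ N, min(|n₁|,|n₂|) ≤ N^{1-ε}} 2⟨n₁⟩^{-2α}⟨n₂⟩^{-2α} → 0 as N → ∞, for each fixed n ∈ ℤ. -/

import Mathlib

open Filter

/-- The Japanese bracket `⟨n⟩ = √(1 + n²)`. -/
noncomputable def jbr (n : ℤ) : ℝ := Real.sqrt (1 + (n : ℝ) ^ 2)

/-- The renormalization constant `C_{α,N} = (∑_{|n| ≤ N} 2 ⟨n⟩^{-4α})^{-1/4}`. -/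
noncomputable def renC (α : ℝ) (N : ℕ) : ℝ :=
  (∑ n ∈ Finset.Icc (-(N : ℤ)) (N : ℤ), 2 / jbr n ^ (4 * α)) ^ (-(1 / 4 : ℝ))

/-- The set of pairs `(n₁, n₂)` with `|n₁|, |n₂| ≤ N` and `n₁ + n₂ = n`. -/
noncomputable def pairSet (N : ℕ) (n : ℤ) : Finset (ℤ × ℤ) :=
  ((Finset.Icc (-(N : ℤ)) (N : ℤ)) ×ˢ (Finset.Icc (-(N : ℤ)) (N : ℤ))).filter
    (fun p => p.1 + p.2 = n)

lemma jbr_one_le (n : ℤ) : 1 ≤ jbr n := by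
  rw [jbr, Real.le_sqrt' one_pos]
  nlinarith [sq_nonneg ((n:ℝ))]

lemma jbr_pos (n : ℤ) : 0 < jbr n := lt_of_lt_of_le one_pos (jbr_one_le n)

lemma jbr_neg (n : ℤ) : jbr (-n) = jbr n := by simp [jbr]

lemma abs_le_jbr (n : ℤ) : |(n:ℝ)| ≤ jbr n := by
  rw [jbr, ← Real.sqrt_sq_eq_abs]
  exact Real.sqrt_le_sqrt (by nlinarith)

lemma jbr_mono {k m : ℤ} (h : |k| ≤ |m|) : jbr k ≤ jbr m := by
  have h' : |(k:ℝ)| ≤ |(m:ℝ)| := by exact_mod_cast h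
  have := abs_nonneg (k:ℝ)
  apply Real.sqrt_le_sqrt
  nlinarith [sq_abs (k:ℝ), sq_abs (m:ℝ)]

lemma jbr_add_le (a b : ℤ) : jbr (a + b) ≤ Real.sqrt 2 * jbr a * jbr b := by
  have h2 : Real.sqrt 2 * jbr a * jbr b = Real.sqrt (2 * (1+(a:ℝ)^2) * (1+(b:ℝ)^2)) := by
    rw [jbr, jbr, ← Real.sqrt_mul (by norm_num), ← Real.sqrt_mul (by positivity)]
  rw [h2, jbr]
  push_cast
  apply Real.sqrt_le_sqrt
  nlinarith [sq_nonneg ((a:ℝ)*b - 1), sq_nonneg ((a:ℝ) - b), sq_nonneg ((a:ℝ)+b), sq_nonneg ((a:ℝ)*b+1)]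

-- ∑_{k=1}^K k^{-s} ≤ K^{1-s}/(1-s)  for 0 < s < 1
lemma sum_rpow_le {s : ℝ} (hs0 : 0 < s) (hs1 : s < 1) (K : ℕ) :
    ∑ j ∈ Finset.range K, ((j:ℝ)+1) ^ (-s) ≤ (K:ℝ) ^ (1-s) / (1-s) := by
  induction K with
  | zero => simp [Real.zero_rpow (by linarith : (1:ℝ)-s ≠ 0)]
  | succ K ih =>
    rw [Finset.sum_range_succ]
    have hK1 : (0:ℝ) < (K:ℝ) + 1 := by positivity
    have key : (K:ℝ) ^ (1-s) ≤ ((K:ℝ)+1) ^ (1-s) - (1-s) * ((K:ℝ)+1) ^ (-s) := by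
      have hb : ((K:ℝ) / ((K:ℝ)+1)) ^ (1-s) ≤ 1 - (1-s) / ((K:ℝ)+1) := by
        have h1 : (K:ℝ) / ((K:ℝ)+1) = 1 + (-(1/((K:ℝ)+1))) := by field_simp; ring
        have := rpow_one_add_le_one_add_mul_self
          (s := -(1/((K:ℝ)+1))) (p := 1-s)
          (by rw [neg_le, neg_neg]; rw [div_le_one hK1]; linarith)
          (by linarith) (by linarith)
        rw [← h1] at this
        calc ((K:ℝ) / ((K:ℝ)+1)) ^ (1-s) ≤ 1 + (1-s) * (-(1/((K:ℝ)+1))) := this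
          _ = 1 - (1-s) / ((K:ℝ)+1) := by ring
      have hdr : ((K:ℝ) / ((K:ℝ)+1)) ^ (1-s) = (K:ℝ) ^ (1-s) / ((K:ℝ)+1) ^ (1-s) :=
        Real.div_rpow (by positivity) (by positivity) _
      rw [hdr, div_le_iff₀ (by positivity)] at hb
      have hsplit : (1 - (1-s) / ((K:ℝ)+1)) * ((K:ℝ)+1) ^ (1-s)
          = ((K:ℝ)+1) ^ (1-s) - (1-s) * ((K:ℝ)+1) ^ (-s) := by
        have : ((K:ℝ)+1) ^ (1-s) / ((K:ℝ)+1) = ((K:ℝ)+1) ^ (-s) := by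
          rw [show (1-s) = 1 + (-s) by ring, Real.rpow_add hK1, Real.rpow_one,
            mul_div_assoc]
          rw [mul_div_assoc', mul_comm, mul_div_assoc, div_self hK1.ne', mul_one]
        rw [← this]; ring
      linarith [hsplit ▸ hb]
    push_cast
    have h1s : (0:ℝ) < 1 - s := by linarith
    have h2 : (K:ℝ)^(1-s)/(1-s) ≤ (((K:ℝ)+1)^(1-s) - (1-s)*((K:ℝ)+1)^(-s))/(1-s) :=
      (div_le_div_iff_of_pos_right h1s).mpr key
    have e : (((K:ℝ)+1)^(1-s) - (1-s)*((K:ℝ)+1)^(-s))/(1-s)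
        = ((K:ℝ)+1)^(1-s)/(1-s) - ((K:ℝ)+1)^(-s) := by
      rw [sub_div, mul_comm, mul_div_assoc, div_self h1s.ne', mul_one]
    rw [e] at h2
    linarith

lemma headsum_le {s : ℝ} (hs0 : 0 < s) (hs1 : s < 1) (K : ℕ) :
    ∑ k ∈ Finset.Icc (-(K:ℤ)) (K:ℤ), jbr k ^ (-s) ≤ 1 + 2 * ((K:ℝ) ^ (1-s) / (1-s)) := by
  have hpos : ∑ k ∈ Finset.Icc (1:ℤ) (K:ℤ), jbr k ^ (-s)
      ≤ (K:ℝ) ^ (1-s) / (1-s) := by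
    refine le_trans ?_ (sum_rpow_le hs0 hs1 K)
    rw [show ∑ j ∈ Finset.range K, ((j:ℝ)+1) ^ (-s)
        = ∑ k ∈ Finset.Icc (1:ℤ) (K:ℤ), ((k:ℝ)) ^ (-s) from ?_]
    · refine Finset.sum_le_sum fun k hk => ?_
      rw [Finset.mem_Icc] at hk
      have hk0 : (0:ℝ) < (k:ℝ) := by exact_mod_cast hk.1
      have : (k:ℝ) ≤ jbr k := le_trans (le_abs_self _) (abs_le_jbr k)
      exact Real.rpow_le_rpow_of_nonpos hk0 this (by linarith)
    · refine Finset.sum_nbij' (fun j => (j:ℤ) + 1) (fun k => (k - 1).toNat) ?_ ?_ ?_ ?_ ?_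
      · intro j hj; rw [Finset.mem_range] at hj; rw [Finset.mem_Icc]; omega
      · intro k hk; rw [Finset.mem_Icc] at hk; rw [Finset.mem_range]; omega
      · intro j hj; omega
      · intro k hk; rw [Finset.mem_Icc] at hk; omega
      · intro j hj; push_cast; ring_nf
  have hneg : ∑ k ∈ Finset.Icc (-(K:ℤ)) (-1:ℤ), jbr k ^ (-s)
      = ∑ k ∈ Finset.Icc (1:ℤ) (K:ℤ), jbr k ^ (-s) := by
    refine Finset.sum_nbij' (fun k => -k) (fun k => -k) ?_ ?_ ?_ ?_ ?_
    · intro k hk; rw [Finset.mem_Icc] at *; omega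
    · intro k hk; rw [Finset.mem_Icc] at *; omega
    · intro k _; ring
    · intro k _; ring
    · intro k _; rw [jbr_neg]
  have hun : Finset.Icc (-(K:ℤ)) (K:ℤ)
      = (Finset.Icc (-(K:ℤ)) (-1:ℤ)) ∪ insert 0 (Finset.Icc (1:ℤ) (K:ℤ)) := by
    ext x; simp only [Finset.mem_Icc, Finset.mem_union, Finset.mem_insert]; omega
  have hdisj : Disjoint (Finset.Icc (-(K:ℤ)) (-1:ℤ)) (insert 0 (Finset.Icc (1:ℤ) (K:ℤ))) := by
    rw [Finset.disjoint_left]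
    intro a ha hb
    simp only [Finset.mem_Icc, Finset.mem_insert] at ha hb
    omega
  rw [hun, Finset.sum_union hdisj, Finset.sum_insert (by simp), hneg]
  have h0 : jbr 0 ^ (-s) = 1 := by
    have : jbr 0 = 1 := by simp [jbr]
    rw [this, Real.one_rpow]
  rw [h0]
  linarith

-- lower bound for the denominator
lemma denom_ge {α : ℝ} (hα₁ : 0 < α) (N : ℕ) (hN : 1 ≤ N) :
    4 * (Real.sqrt 2) ^ (-(4*α)) * (N:ℝ) ^ (1-4*α)
      ≤ ∑ k ∈ Finset.Icc (-(N : ℤ)) (N : ℤ), 2 / jbr k ^ (4 * α) := by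
  have hNR : (1:ℝ) ≤ (N:ℝ) := by exact_mod_cast hN
  have hjN : jbr (N:ℤ) ≤ Real.sqrt 2 * N := by
    rw [jbr]
    rw [show Real.sqrt 2 * N = Real.sqrt (2 * N^2) by
      rw [Real.sqrt_mul (by norm_num), Real.sqrt_sq (by linarith)]]
    apply Real.sqrt_le_sqrt; push_cast; nlinarith
  have hterm : ∀ k ∈ Finset.Icc (-(N : ℤ)) (N : ℤ),
      2 / (Real.sqrt 2 * N) ^ (4*α) ≤ 2 / jbr k ^ (4 * α) := by
    intro k hk
    rw [Finset.mem_Icc] at hk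
    have habs : |k| ≤ |(N:ℤ)| := by rw [Int.abs_natCast]; exact abs_le.mpr ⟨hk.1, hk.2⟩
    have h1 : jbr k ≤ Real.sqrt 2 * N := le_trans (jbr_mono habs) hjN
    have h2 : jbr k ^ (4*α) ≤ (Real.sqrt 2 * N) ^ (4*α) :=
      Real.rpow_le_rpow (jbr_pos k).le h1 (by linarith)
    apply div_le_div_of_nonneg_left (by norm_num) (Real.rpow_pos_of_pos (jbr_pos k) _) h2
  have hcard : (Finset.Icc (-(N : ℤ)) (N : ℤ)).card = 2*N+1 := by
    rw [Int.card_Icc]; omega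
  have := Finset.card_nsmul_le_sum (Finset.Icc (-(N : ℤ)) (N : ℤ))
    _ _ hterm
  rw [hcard, nsmul_eq_mul] at this
  refine le_trans ?_ this
  have hb : (Real.sqrt 2 * N) ^ (4*α) = (Real.sqrt 2)^(4*α) * (N:ℝ)^(4*α) :=
    Real.mul_rpow (Real.sqrt_nonneg 2) (by linarith)
  have hNps : (0:ℝ) < (N:ℝ)^(4*α) := Real.rpow_pos_of_pos (by linarith) _
  have hsps : (0:ℝ) < (Real.sqrt 2)^(4*α) := Real.rpow_pos_of_pos (by norm_num [Real.sqrt_pos]) _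
  rw [hb]
  have e1 : (Real.sqrt 2) ^ (-(4*α)) = ((Real.sqrt 2)^(4*α))⁻¹ := Real.rpow_neg (Real.sqrt_nonneg 2) _
  have e2 : (N:ℝ)^(1-4*α) = (N:ℝ) * ((N:ℝ)^(4*α))⁻¹ := by
    rw [show (1-4*α) = 1 + (-(4*α)) by ring, Real.rpow_add (by linarith), Real.rpow_one,
      Real.rpow_neg (by linarith)]
  have hY : (0:ℝ) < (((Real.sqrt 2)^(4*α))⁻¹ * ((N:ℝ)^(4*α))⁻¹) := by positivity
  rw [e1, e2, div_eq_mul_inv, mul_inv]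
  push_cast
  nlinarith [hY, mul_pos hY (show (0:ℝ) < (N:ℝ) by linarith)]

lemma rpow_jbr_nonneg (k : ℤ) (e : ℝ) : 0 ≤ jbr k ^ e := Real.rpow_nonneg (jbr_pos k).le e

lemma term_nonneg {α : ℝ} (p : ℤ × ℤ) :
    0 ≤ 2 * jbr p.1 ^ (-(2 * α)) * jbr p.2 ^ (-(2 * α)) :=
  mul_nonneg (mul_nonneg two_pos.le (rpow_jbr_nonneg _ _)) (rpow_jbr_nonneg _ _)

lemma term_le {α : ℝ} (hα₁ : 0 < α) {n a b : ℤ} (hab : a + b = n) :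
    2 * jbr a ^ (-(2 * α)) * jbr b ^ (-(2 * α))
      ≤ 2 * (Real.sqrt 2 * jbr n) ^ (2*α) * jbr a ^ (-(4 * α)) := by
  have hc : (0:ℝ) < Real.sqrt 2 * jbr n :=
    mul_pos (Real.sqrt_pos.mpr two_pos) (jbr_pos n)
  have hja : jbr a ≤ Real.sqrt 2 * jbr n * jbr b := by
    have : a = n + (-b) := by omega
    rw [this]
    calc jbr (n + (-b)) ≤ Real.sqrt 2 * jbr n * jbr (-b) := jbr_add_le n (-b)
      _ = Real.sqrt 2 * jbr n * jbr b := by rw [jbr_neg]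
  have hb2 : jbr a / (Real.sqrt 2 * jbr n) ≤ jbr b := by
    rw [div_le_iff₀ hc]; linarith [hja]
  have hd : (0:ℝ) < jbr a / (Real.sqrt 2 * jbr n) := div_pos (jbr_pos a) hc
  have h1 : jbr b ^ (-(2*α)) ≤ (jbr a / (Real.sqrt 2 * jbr n)) ^ (-(2*α)) :=
    Real.rpow_le_rpow_of_nonpos hd hb2 (by linarith)
  have h2 : (jbr a / (Real.sqrt 2 * jbr n)) ^ (-(2*α))
      = (Real.sqrt 2 * jbr n) ^ (2*α) * jbr a ^ (-(2*α)) := by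
    rw [Real.rpow_neg hd.le, Real.div_rpow (jbr_pos a).le hc.le,
      Real.rpow_neg (jbr_pos a).le, inv_div, div_eq_mul_inv]
  have h3 : jbr a ^ (-(2*α)) * jbr a ^ (-(2*α)) = jbr a ^ (-(4*α)) := by
    rw [← Real.rpow_add (jbr_pos a)]; congr 1; ring
  calc 2 * jbr a ^ (-(2 * α)) * jbr b ^ (-(2 * α))
      ≤ 2 * jbr a ^ (-(2 * α)) * ((Real.sqrt 2 * jbr n) ^ (2*α) * jbr a ^ (-(2*α))) := by
        rw [← h2]
        exact mul_le_mul_of_nonneg_left h1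
          (mul_nonneg two_pos.le (rpow_jbr_nonneg _ _))
    _ = 2 * (Real.sqrt 2 * jbr n) ^ (2*α) * (jbr a ^ (-(2*α)) * jbr a ^ (-(2*α))) := by ring
    _ = 2 * (Real.sqrt 2 * jbr n) ^ (2*α) * jbr a ^ (-(4 * α)) := by rw [h3]

lemma sum_filter_le {α : ℝ} (hα₁ : 0 < α) (n : ℤ) (N : ℕ) (T : ℝ) (K : ℕ) (hTK : T ≤ (K:ℝ)) :
    ∑ p ∈ (pairSet N n).filter (fun p => min |(p.1 : ℝ)| |(p.2 : ℝ)| ≤ T),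
        2 * jbr p.1 ^ (-(2 * α)) * jbr p.2 ^ (-(2 * α))
      ≤ 2 * (2 * (Real.sqrt 2 * jbr n) ^ (2*α))
          * ∑ k ∈ Finset.Icc (-(K:ℤ)) (K:ℤ), jbr k ^ (-(4*α)) := by
  have hc : (0:ℝ) < Real.sqrt 2 * jbr n :=
    mul_pos (Real.sqrt_pos.mpr two_pos) (jbr_pos n)
  set C := 2 * (Real.sqrt 2 * jbr n) ^ (2*α) with hC
  have hC0 : 0 ≤ C := mul_nonneg two_pos.le (Real.rpow_nonneg hc.le _)
  set A := (pairSet N n).filter (fun p => |(p.1 : ℝ)| ≤ T) with hA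
  set B := (pairSet N n).filter (fun p => |(p.2 : ℝ)| ≤ T) with hB
  set f : ℤ × ℤ → ℝ := fun p => 2 * jbr p.1 ^ (-(2 * α)) * jbr p.2 ^ (-(2 * α)) with hf
  have hsub : (pairSet N n).filter (fun p => min |(p.1 : ℝ)| |(p.2 : ℝ)| ≤ T) ⊆ A ∪ B := by
    intro p hp
    rw [Finset.mem_filter] at hp
    rw [Finset.mem_union, hA, hB, Finset.mem_filter, Finset.mem_filter]
    rcases min_le_iff.mp hp.2 with h | h
    · exact Or.inl ⟨hp.1, h⟩
    · exact Or.inr ⟨hp.1, h⟩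
  have step1 : ∑ p ∈ (pairSet N n).filter (fun p => min |(p.1 : ℝ)| |(p.2 : ℝ)| ≤ T), f p
      ≤ (∑ p ∈ A, f p) + ∑ p ∈ B, f p := by
    refine le_trans (Finset.sum_le_sum_of_subset_of_nonneg hsub
      (fun p _ _ => term_nonneg p)) ?_
    have huni : ((∑ p ∈ A ∪ B, f p) + ∑ p ∈ A ∩ B, f p) = (∑ p ∈ A, f p) + ∑ p ∈ B, f p :=
      Finset.sum_union_inter
    have hint : 0 ≤ ∑ p ∈ A ∩ B, f p := Finset.sum_nonneg fun p _ => term_nonneg p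
    linarith
  set H := ∑ k ∈ Finset.Icc (-(K:ℤ)) (K:ℤ), jbr k ^ (-(4*α)) with hH
  have hmem : ∀ k : ℤ, |(k:ℝ)| ≤ T → k ∈ Finset.Icc (-(K:ℤ)) (K:ℤ) := by
    intro k hk
    have h' : |(k:ℝ)| ≤ (K:ℝ) := le_trans hk hTK
    rw [Finset.mem_Icc]
    have := abs_le.mp h'
    constructor <;> [exact_mod_cast this.1; exact_mod_cast this.2]
  have hAle : ∑ p ∈ A, f p ≤ C * H := by
    have hstep : ∑ p ∈ A, f p ≤ ∑ p ∈ A, C * jbr p.1 ^ (-(4*α)) := by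
      refine Finset.sum_le_sum fun p hp => ?_
      rw [hA, Finset.mem_filter, pairSet, Finset.mem_filter] at hp
      exact term_le hα₁ hp.1.2
    refine le_trans hstep ?_
    have hinj : ∀ p ∈ A, ∀ q ∈ A, p.1 = q.1 → p = q := by
      intro p hp q hq h
      rw [hA, Finset.mem_filter, pairSet, Finset.mem_filter] at hp hq
      have e1 := hp.1.2; have e2 := hq.1.2
      exact Prod.ext h (by omega)
    have himg : ∑ k ∈ A.image Prod.fst, C * jbr k ^ (-(4*α))
        = ∑ p ∈ A, C * jbr p.1 ^ (-(4*α)) := Finset.sum_image hinj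
    rw [← himg, hH, Finset.mul_sum]
    refine Finset.sum_le_sum_of_subset_of_nonneg ?_
      (fun k _ _ => mul_nonneg hC0 (rpow_jbr_nonneg _ _))
    intro k hk
    rw [Finset.mem_image] at hk
    obtain ⟨p, hp, rfl⟩ := hk
    rw [hA, Finset.mem_filter] at hp
    exact hmem _ hp.2
  have hBle : ∑ p ∈ B, f p ≤ C * H := by
    have hstep : ∑ p ∈ B, f p ≤ ∑ p ∈ B, C * jbr p.2 ^ (-(4*α)) := by
      refine Finset.sum_le_sum fun p hp => ?_
      rw [hB, Finset.mem_filter, pairSet, Finset.mem_filter] at hp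
      have hba : p.2 + p.1 = n := by omega
      calc f p = 2 * jbr p.2 ^ (-(2 * α)) * jbr p.1 ^ (-(2 * α)) := by rw [hf]; ring
        _ ≤ C * jbr p.2 ^ (-(4*α)) := term_le hα₁ hba
    refine le_trans hstep ?_
    have hinj : ∀ p ∈ B, ∀ q ∈ B, p.2 = q.2 → p = q := by
      intro p hp q hq h
      rw [hB, Finset.mem_filter, pairSet, Finset.mem_filter] at hp hq
      have e1 := hp.1.2; have e2 := hq.1.2
      exact Prod.ext (by omega) h
    have himg : ∑ k ∈ B.image Prod.snd, C * jbr k ^ (-(4*α))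
        = ∑ p ∈ B, C * jbr p.2 ^ (-(4*α)) := Finset.sum_image hinj
    rw [← himg, hH, Finset.mul_sum]
    refine Finset.sum_le_sum_of_subset_of_nonneg ?_
      (fun k _ _ => mul_nonneg hC0 (rpow_jbr_nonneg _ _))
    intro k hk
    rw [Finset.mem_image] at hk
    obtain ⟨p, hp, rfl⟩ := hk
    rw [hB, Finset.mem_filter] at hp
    exact hmem _ hp.2
  calc ∑ p ∈ (pairSet N n).filter (fun p => min |(p.1 : ℝ)| |(p.2 : ℝ)| ≤ T), f p
      ≤ (∑ p ∈ A, f p) + ∑ p ∈ B, f p := step1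
    _ ≤ C * H + C * H := add_le_add hAle hBle
    _ = 2 * C * H := by ring

lemma renC_pow_nonneg (α : ℝ) (N : ℕ) : 0 ≤ renC α N ^ 4 := by
  apply pow_nonneg
  exact Real.rpow_nonneg (Finset.sum_nonneg fun k _ => by
    apply div_nonneg (by norm_num) (rpow_jbr_nonneg _ _)) _

lemma expr_nonneg (α ε : ℝ) (n : ℤ) (N : ℕ) :
    0 ≤ renC α N ^ 4 *
        ∑ p ∈ (pairSet N n).filter
            (fun p => min |(p.1 : ℝ)| |(p.2 : ℝ)| ≤ (N : ℝ) ^ (1 - ε)),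
          2 * jbr p.1 ^ (-(2 * α)) * jbr p.2 ^ (-(2 * α)) :=
  mul_nonneg (renC_pow_nonneg α N) (Finset.sum_nonneg fun p _ => term_nonneg p)

lemma main_aux (α ε : ℝ) (hα₁ : 0 < α) (hα₂ : α < 1 / 4) (hε : 0 < ε) (hε2 : ε ≤ 1/2) (n : ℤ) :
    Tendsto (fun N : ℕ =>
      renC α N ^ 4 *
        ∑ p ∈ (pairSet N n).filter
            (fun p => min |(p.1 : ℝ)| |(p.2 : ℝ)| ≤ (N : ℝ) ^ (1 - ε)),
          2 * jbr p.1 ^ (-(2 * α)) * jbr p.2 ^ (-(2 * α)))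
      atTop (nhds 0) := by
  have hs0 : (0:ℝ) < 4*α := by linarith
  have hs1 : 4*α < 1 := by linarith
  set c : ℝ := 4 * (Real.sqrt 2) ^ (-(4*α)) with hc
  have hc0 : 0 < c := by positivity
  set C : ℝ := 2 * (Real.sqrt 2 * jbr n) ^ (2*α) with hCdef
  have hjn : (0:ℝ) < Real.sqrt 2 * jbr n :=
    mul_pos (Real.sqrt_pos.mpr two_pos) (jbr_pos n)
  have hC0 : 0 ≤ C := mul_nonneg two_pos.le (Real.rpow_nonneg hjn.le _)
  set g : ℕ → ℝ := fun N =>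
    (c⁻¹ * (2*C)) * (N:ℝ) ^ (-(1-4*α))
      + (c⁻¹ * (4*C*(2:ℝ)^(1-4*α)/(1-4*α))) * (N:ℝ) ^ (-(ε*(1-4*α))) with hg
  have hgto : Tendsto g atTop (nhds 0) := by
    have h1 : Tendsto (fun x : ℝ => x ^ (-(1-4*α))) atTop (nhds 0) :=
      tendsto_rpow_neg_atTop (by linarith)
    have h2 : Tendsto (fun x : ℝ => x ^ (-(ε*(1-4*α)))) atTop (nhds 0) :=
      tendsto_rpow_neg_atTop (by nlinarith)
    have hcast : Tendsto (fun N : ℕ => (N:ℝ)) atTop atTop := tendsto_natCast_atTop_atTop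
    have h0 : (0:ℝ) = (c⁻¹ * (2*C)) * 0 + (c⁻¹ * (4*C*(2:ℝ)^(1-4*α)/(1-4*α))) * 0 := by ring
    rw [hg, h0]
    exact ((h1.comp hcast).const_mul (c⁻¹ * (2*C))).add
      ((h2.comp hcast).const_mul (c⁻¹ * (4*C*(2:ℝ)^(1-4*α)/(1-4*α))))
  refine tendsto_of_tendsto_of_tendsto_of_le_of_le'
    (tendsto_const_nhds : Tendsto (fun _ : ℕ => (0:ℝ)) atTop (nhds 0)) hgto
    (Eventually.of_forall fun N => expr_nonneg α ε n N) ?_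
  filter_upwards [eventually_ge_atTop 1] with N hN
  have hN0 : (0:ℝ) < (N:ℝ) := by exact_mod_cast hN
  have hN1 : (1:ℝ) ≤ (N:ℝ) := by exact_mod_cast hN
  set T : ℝ := (N:ℝ) ^ (1-ε) with hT
  set K : ℕ := ⌈T⌉₊ with hK
  have hT0 : 0 ≤ T := Real.rpow_nonneg hN0.le _
  have hT1 : 1 ≤ T := by
    have := Real.rpow_le_rpow_of_exponent_le hN1 (show (0:ℝ) ≤ 1-ε by linarith)
    rwa [Real.rpow_zero] at this
  have hTK : T ≤ (K:ℝ) := Nat.le_ceil T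
  have hK2T : (K:ℝ) ≤ 2*T := by
    have := (Nat.ceil_lt_add_one hT0).le
    linarith
  -- denominator
  set D : ℝ := ∑ k ∈ Finset.Icc (-(N : ℤ)) (N : ℤ), 2 / jbr k ^ (4 * α) with hD
  have hDge : c * (N:ℝ)^(1-4*α) ≤ D := by
    have := denom_ge hα₁ N hN
    rw [hD, hc]; linarith [this]
  have hcN : (0:ℝ) < c * (N:ℝ)^(1-4*α) := by positivity
  have hD0 : 0 < D := lt_of_lt_of_le hcN hDge
  have hren : renC α N ^ 4 = D⁻¹ := by
    rw [renC, ← hD, ← Real.rpow_natCast (D ^ (-(1/4:ℝ))) 4, ← Real.rpow_mul hD0.le]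
    norm_num [Real.rpow_neg_one]
  -- numerator bound
  set S : ℝ := ∑ p ∈ (pairSet N n).filter
      (fun p => min |(p.1 : ℝ)| |(p.2 : ℝ)| ≤ T),
      2 * jbr p.1 ^ (-(2 * α)) * jbr p.2 ^ (-(2 * α)) with hS
  have hS0 : 0 ≤ S := Finset.sum_nonneg fun p _ => term_nonneg p
  set Y : ℝ := (N:ℝ) ^ ((1-ε)*(1-4*α)) with hY
  have hKpow : (K:ℝ)^(1-4*α) ≤ (2:ℝ)^(1-4*α) * Y := by
    have h1 : (K:ℝ)^(1-4*α) ≤ (2*T)^(1-4*α) :=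
      Real.rpow_le_rpow (Nat.cast_nonneg K) hK2T (by linarith)
    have h2 : (2*T)^(1-4*α) = (2:ℝ)^(1-4*α) * T^(1-4*α) :=
      Real.mul_rpow (by norm_num) hT0
    have h3 : T^(1-4*α) = Y := by
      rw [hT, hY, ← Real.rpow_mul hN0.le]
    rw [h2, h3] at h1
    exact h1
  have hSle : S ≤ 2*C + (4*C/(1-4*α)) * ((2:ℝ)^(1-4*α) * Y) := by
    have h1 : S ≤ 2 * C * ∑ k ∈ Finset.Icc (-(K:ℤ)) (K:ℤ), jbr k ^ (-(4*α)) :=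
      sum_filter_le hα₁ n N T K hTK
    have h2 : ∑ k ∈ Finset.Icc (-(K:ℤ)) (K:ℤ), jbr k ^ (-(4*α))
        ≤ 1 + 2 * ((K:ℝ)^(1-4*α)/(1-4*α)) := headsum_le hs0 hs1 K
    have h3 : (K:ℝ)^(1-4*α)/(1-4*α) ≤ ((2:ℝ)^(1-4*α) * Y)/(1-4*α) :=
      div_le_div_of_nonneg_right ?_ (by linarith)
    · calc S ≤ 2 * C * ∑ k ∈ Finset.Icc (-(K:ℤ)) (K:ℤ), jbr k ^ (-(4*α)) := h1
        _ ≤ 2 * C * (1 + 2 * (((2:ℝ)^(1-4*α) * Y)/(1-4*α))) := by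
            apply mul_le_mul_of_nonneg_left _ (by linarith : (0:ℝ) ≤ 2*C)
            linarith
        _ = 2*C + (4*C/(1-4*α)) * ((2:ℝ)^(1-4*α) * Y) := by ring
    · exact hKpow
  -- assemble
  have hDinv : D⁻¹ ≤ (c * (N:ℝ)^(1-4*α))⁻¹ := by
    apply inv_anti₀ hcN hDge
  have e1 : ((N:ℝ)^(1-4*α))⁻¹ = (N:ℝ)^(-(1-4*α)) := (Real.rpow_neg hN0.le _).symm
  have e2 : Y * (N:ℝ)^(-(1-4*α)) = (N:ℝ)^(-(ε*(1-4*α))) := by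
    rw [hY, ← Real.rpow_add hN0]
    congr 1; ring
  calc renC α N ^ 4 * S = D⁻¹ * S := by rw [hren]
    _ ≤ (c * (N:ℝ)^(1-4*α))⁻¹ * (2*C + (4*C/(1-4*α)) * ((2:ℝ)^(1-4*α) * Y)) :=
        mul_le_mul hDinv hSle hS0 (by positivity)
    _ = (c⁻¹ * (2*C)) * ((N:ℝ)^(1-4*α))⁻¹
        + (c⁻¹ * (4*C*(2:ℝ)^(1-4*α)/(1-4*α))) * (Y * ((N:ℝ)^(1-4*α))⁻¹) := by
        rw [mul_inv]; ring
    _ = g N := by rw [e1, e2, hg]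


/-- For `0 < α < 1/4` and every `ε > 0` and fixed `n`, the contribution to
`C_{α,N}⁴ ∑_{n₁+n₂=n, |n₁|,|n₂|≤N} 2⟨n₁⟩^{-2α}⟨n₂⟩^{-2α}` from the range
`min(|n₁|,|n₂|) ≤ N^{1-ε}` vanishes as `N → ∞`. -/
theorem renC_low_frequency_contribution_vanishes (α ε : ℝ)
    (hα₁ : 0 < α) (hα₂ : α < 1 / 4) (hε : 0 < ε) (n : ℤ) :
    Tendsto (fun N : ℕ =>
      renC α N ^ 4 *
        ∑ p ∈ (pairSet N n).filter
            (fun p => min |(p.1 : ℝ)| |(p.2 : ℝ)| ≤ (N : ℝ) ^ (1 - ε)),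
          2 * jbr p.1 ^ (-(2 * α)) * jbr p.2 ^ (-(2 * α)))
      atTop (nhds 0) := by
  set ε' : ℝ := min ε (1/2) with hε'def
  have hε'0 : 0 < ε' := lt_min hε (by norm_num)
  have hε'2 : ε' ≤ 1/2 := min_le_right _ _
  have hεε' : ε' ≤ ε := min_le_left _ _
  refine tendsto_of_tendsto_of_tendsto_of_le_of_le'
    (tendsto_const_nhds : Tendsto (fun _ : ℕ => (0:ℝ)) atTop (nhds 0))
    (main_aux α ε' hα₁ hα₂ hε'0 hε'2 n)
    (Eventually.of_forall fun N => expr_nonneg α ε n N) ?_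
  filter_upwards [eventually_ge_atTop 1] with N hN
  have hN1 : (1:ℝ) ≤ (N:ℝ) := by exact_mod_cast hN
  apply mul_le_mul_of_nonneg_left _ (renC_pow_nonneg α N)
  apply Finset.sum_le_sum_of_subset_of_nonneg _ (fun p _ _ => term_nonneg p)
  intro p hp
  rw [Finset.mem_filter] at hp ⊢
  refine ⟨hp.1, le_trans hp.2 ?_⟩
  exact Real.rpow_le_rpow_of_exponent_le hN1 (by linarith)
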